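/- Under the stated assumptions, 0 < q(m) < p(m) for all m ∈ ℤ. -/
import Mathlib


/-- `pSeq a b k l p` says that `p : ℤ → ℤ` is the (unique) sequence with `p 0 = l`,
`p 1 = k`, and `p (m+2) = b * p (m+1) - p m` for even `m`,
`p (m+2) = a * p (m+1) - p m` for odd `m`. -/
def pSeq (a b k l : ℤ) (p : ℤ → ℤ) : Prop :=
  p 0 = l ∧ p 1 = k ∧
    ∀ m : ℤ, p (m + 2) = (if Even m then b else a) * p (m + 1) - p m

/-- Monotone positivity lemma: a sequence satisfying the recurrence with
coefficients `≥ 2` that starts positive and nondecreasing stays so. -/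
lemma aux_mono (a b : ℤ) (ha : 2 ≤ a) (hb : 2 ≤ b) (s : ℤ → ℤ)
    (hs : ∀ m : ℤ, s (m + 2) = (if Even m then b else a) * s (m + 1) - s m)
    (h0 : 0 < s 0) (h01 : s 0 ≤ s 1) :
    ∀ n : ℕ, 0 < s (n : ℤ) ∧ s (n : ℤ) ≤ s ((n : ℤ) + 1) := by
  intro n
  induction n with
  | zero => exact ⟨by exact_mod_cast h0, by norm_num; exact h01⟩
  | succ n ih =>
    obtain ⟨hpos, hmono⟩ := ih
    have h2 := hs (n : ℤ)
    have hcoeff : 2 ≤ (if Even (n : ℤ) then b else a) := by split <;> assumption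
    have hp1 : 0 < s ((n : ℤ) + 1) := lt_of_lt_of_le hpos hmono
    have hmul : 2 * s ((n : ℤ) + 1) ≤ (if Even (n : ℤ) then b else a) * s ((n : ℤ) + 1) :=
      mul_le_mul_of_nonneg_right hcoeff hp1.le
    have e2 : (n : ℤ) + 1 + 1 = (n : ℤ) + 2 := by ring
    refine ⟨by push_cast; exact hp1, ?_⟩
    push_cast
    rw [e2, h2]
    linarith

/-- The reversed sequence satisfies the same shape of recurrence. -/
lemma aux_neg (a b : ℤ) (s : ℤ → ℤ)
    (hs : ∀ m : ℤ, s (m + 2) = (if Even m then b else a) * s (m + 1) - s m) :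
    ∀ m : ℤ, s (-(m + 2)) = (if Even m then b else a) * s (-(m + 1)) - s (-m) := by
  intro m
  have h := hs (-m - 2)
  have e1 : -m - 2 + 2 = -m := by ring
  have e2 : -m - 2 + 1 = -(m + 1) := by ring
  have e3 : Even (-m - 2) ↔ Even m := by
    rw [Int.even_sub, even_neg]
    simp [Int.even_iff]
  rw [e1, e2] at h
  simp only [e3] at h
  have : -m - 2 = -(m + 2) := by ring
  rw [this] at h
  linarith

theorem q_pos_lt_p (a b k l : ℤ) (ha : 2 ≤ a) (hb : 2 ≤ b) (hab : 4 < a * b)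
    (hl : 1 < l) (hlk : l < k) (hka : k < (a - 1) * l) (hcop : IsCoprime k l)
    (c : ℤ) (hc1 : 1 ≤ c) (hck : c ≤ k - 1)
    (hcl : (c : ℚ) / k < 1 / l) (hcr : (1 : ℚ) / l < (c + 1) / k)
    (p : ℤ → ℤ) (hp : pSeq a b k l p)
    (q : ℤ → ℤ) (hq : pSeq a b c 1 q) :
    ∀ m : ℤ, 0 < q m ∧ q m < p m := by
  obtain ⟨hp0, hp1, hpr⟩ := hp
  obtain ⟨hq0, hq1, hqr⟩ := hq
  have hl0 : (0 : ℤ) < l := by linarith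
  have hk0 : (0 : ℤ) < k := by linarith
  -- translate the rational inequalities
  have hclk : c * l < k := by
    rw [div_lt_div_iff₀ (by exact_mod_cast hk0) (by exact_mod_cast hl0)] at hcl
    have : (c : ℚ) * l < k := by linarith
    exact_mod_cast this
  have hkcl : k < (c + 1) * l := by
    rw [div_lt_div_iff₀ (by exact_mod_cast hl0) (by exact_mod_cast hk0)] at hcr
    have : (k : ℚ) < (c + 1) * l := by linarith
    exact_mod_cast this
  have hca : c ≤ a - 2 := by
    have h1 : c * l < (a - 1) * l := lt_trans hclk hka
    have h2 : c < a - 1 := lt_of_mul_lt_mul_right h1 hl0.le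
    omega
  -- values at -1
  have hqm1 : q (-1) = a - c := by
    have h := hqr (-1)
    norm_num at h
    rw [hq0, hq1] at h
    linarith
  have hpm1 : p (-1) = a * l - k := by
    have h := hpr (-1)
    norm_num at h
    rw [hp0, hp1] at h
    linarith
  -- the difference sequence
  set d : ℤ → ℤ := fun m => p m - q m with hd
  have hdr : ∀ m : ℤ, d (m + 2) = (if Even m then b else a) * d (m + 1) - d m := by
    intro m
    simp only [hd]
    rw [hpr m, hqr m]
    ring
  -- forward facts
  have Fq := aux_mono a b ha hb q hqr (by rw [hq0]; norm_num) (by rw [hq0, hq1]; exact hc1)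
  have Fd := aux_mono a b ha hb d hdr
    (by simp only [hd]; rw [hp0, hq0]; linarith)
    (by
      simp only [hd]; rw [hp0, hq0, hp1, hq1]
      nlinarith [mul_nonneg (by linarith : (0 : ℤ) ≤ c - 1) (by linarith : (0 : ℤ) ≤ l - 1)])
  -- backward sequences
  have hqr' : ∀ m : ℤ, (fun n => q (-n)) (m + 2) =
      (if Even m then b else a) * (fun n => q (-n)) (m + 1) - (fun n => q (-n)) m := by
    intro m; simp only; exact aux_neg a b q hqr m
  have hdr' : ∀ m : ℤ, (fun n => d (-n)) (m + 2) =
      (if Even m then b else a) * (fun n => d (-n)) (m + 1) - (fun n => d (-n)) m := by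
    intro m; simp only; exact aux_neg a b d hdr m
  have Bq := aux_mono a b ha hb (fun n => q (-n)) hqr'
    (by simp only [neg_zero]; rw [hq0]; norm_num)
    (by simp only [neg_zero]; rw [hq0, hqm1]; linarith)
  have Bd := aux_mono a b ha hb (fun n => d (-n)) hdr'
    (by simp only [neg_zero, hd]; rw [hp0, hq0]; linarith)
    (by
      simp only [neg_zero, hd]
      rw [hp0, hq0, hpm1, hqm1]
      nlinarith [mul_nonneg (by linarith : (0 : ℤ) ≤ a - 2 - c)
        (by linarith : (0 : ℤ) ≤ l - 1)])
  -- conclude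
  intro m
  rcases le_or_gt 0 m with h | h
  · have hq' := (Fq m.toNat).1
    have hd' := (Fd m.toNat).1
    rw [Int.toNat_of_nonneg h] at hq' hd'
    refine ⟨hq', ?_⟩
    simp only [hd] at hd'
    linarith
  · have hm : ((-m).toNat : ℤ) = -m := Int.toNat_of_nonneg (by linarith)
    have hq' := (Bq (-m).toNat).1
    have hd' := (Bd (-m).toNat).1
    simp only [hm, neg_neg] at hq' hd'
    refine ⟨hq', ?_⟩
    simp only [hd] at hd'
    linarith
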